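/- The normalized-background TMSV total QFI 𝓘(M) = 4𝒩_S[N_B + 1 + 𝒩_S(N_B + 1 - η²)/M] / ((N_B + 1 - η²)[N_B + 1 + 𝒩_S(2N_B + 1 - η²)/M]) is strictly increasing in M (for 𝒩_S > 0, N_B > 0, η ∈ (0,1)) and converges to 4𝒩_S/(N_B + 1 - η²) as M → ∞, which equals the ultimate bound 4𝒩_S/(N_B + 1 - η²); moreover 𝓘(M) < 4𝒩_S/(N_B + 1 - η²) for every finite M. -/
import Mathlib


noncomputable def Inorm (NB η 𝒩 M : ℝ) : ℝ :=
  4*𝒩*(NB + 1 + 𝒩*(NB + 1 - η^2)/M) /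
    ((NB + 1 - η^2)*(NB + 1 + 𝒩*(2*NB + 1 - η^2)/M))

lemma Inorm_eq (NB η 𝒩 M : ℝ) (hM : M ≠ 0) :
    Inorm NB η 𝒩 M =
      4*𝒩*((NB+1)*M + 𝒩*(NB + 1 - η^2)) /
        ((NB + 1 - η^2)*((NB+1)*M + 𝒩*(2*NB + 1 - η^2))) := by
  have h1 : NB + 1 + 𝒩*(NB + 1 - η^2)/M = ((NB+1)*M + 𝒩*(NB + 1 - η^2))/M := by
    field_simp
  have h2 : NB + 1 + 𝒩*(2*NB + 1 - η^2)/M = ((NB+1)*M + 𝒩*(2*NB + 1 - η^2))/M := by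
    field_simp
  unfold Inorm
  rw [h1, h2, mul_div_assoc' (4*𝒩), mul_div_assoc' (NB + 1 - η^2),
    div_div_div_cancel_right₀ hM]

theorem tmsv_normalized_saturates_bound (NB η 𝒩 : ℝ) (hNB : 0 < NB)
    (hη0 : 0 < η) (hη1 : η < 1) (h𝒩 : 0 < 𝒩) :
    StrictMonoOn (fun M => Inorm NB η 𝒩 M) (Set.Ioi 0) ∧
    Filter.Tendsto (fun M => Inorm NB η 𝒩 M) Filter.atTop
      (nhds (4*𝒩/(NB + 1 - η^2))) ∧
    (∀ M : ℝ, 0 < M → Inorm NB η 𝒩 M < 4*𝒩/(NB + 1 - η^2)) := by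
  have hη2 : η^2 < 1 := by nlinarith
  have ha : 0 < NB + 1 - η^2 := by linarith
  have hb : 0 < NB + 1 := by linarith
  have hc : 0 < 2*NB + 1 - η^2 := by linarith
  have hden : ∀ M : ℝ, 0 < M → 0 < (NB+1)*M + 𝒩*(2*NB + 1 - η^2) := by
    intro M hM; positivity
  have hnum : ∀ M : ℝ, 0 < M → 0 < (NB+1)*M + 𝒩*(NB + 1 - η^2) := by
    intro M hM; positivity
  refine ⟨?_, ?_, ?_⟩
  · intro x hx y hy hxy
    simp only [Set.mem_Ioi] at hx hy
    show Inorm NB η 𝒩 x < Inorm NB η 𝒩 y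
    rw [Inorm_eq NB η 𝒩 x (ne_of_gt hx), Inorm_eq NB η 𝒩 y (ne_of_gt hy)]
    rw [div_lt_div_iff₀ (by positivity) (by positivity)]
    nlinarith [mul_pos (mul_pos (mul_pos h𝒩 h𝒩) (mul_pos ha hb))
      (mul_pos hNB (sub_pos.mpr hxy))]
  · have h0 : Filter.Tendsto (fun M : ℝ => 𝒩*(NB + 1 - η^2)/M) Filter.atTop (nhds 0) :=
      Filter.Tendsto.div_atTop tendsto_const_nhds Filter.tendsto_id
    have h0' : Filter.Tendsto (fun M : ℝ => 𝒩*(2*NB + 1 - η^2)/M) Filter.atTop (nhds 0) :=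
      Filter.Tendsto.div_atTop tendsto_const_nhds Filter.tendsto_id
    have hT : Filter.Tendsto (fun M => Inorm NB η 𝒩 M) Filter.atTop
        (nhds (4*𝒩*(NB + 1 + 0) / ((NB + 1 - η^2)*(NB + 1 + 0)))) := by
      apply Filter.Tendsto.div
      · exact (tendsto_const_nhds.add h0).const_mul _
      · exact ((tendsto_const_nhds.add h0').const_mul _)
      · have : (NB + 1 + 0) ≠ 0 := by norm_num; linarith
        positivity
    convert hT using 2
    rw [add_zero]
    rw [mul_comm (NB + 1 - η^2) (NB+1), mul_comm (4*𝒩) (NB+1), mul_div_mul_left]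
    linarith
  · intro M hM
    rw [Inorm_eq NB η 𝒩 M (ne_of_gt hM)]
    rw [div_lt_div_iff₀ (by positivity) ha]
    nlinarith [hnum M hM, mul_pos (mul_pos h𝒩 h𝒩) hNB]
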